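/- arXiv:0910.4858 — 2 statements merged into one kernel-verified Lean document; each statement's English description precedes it below -/
import Mathlib

section
/- Let $\mu \in \mathbb{R}$ and let $\Gamma(x) = \Gamma_+ \chi_{[0,\infty)}(x) + \Gamma_- \chi_{(-\infty,0)}(x)$ with $\Gamma_+ \neq \Gamma_-$. Then the only solution $\phi \in H^1(\mathbb{R}) \cap C^1(\mathbb{R})$ of the stationary equation $\phi'' + \mu\phi + \Gamma(x)|\phi|^2\phi = 0$ on $\mathbb{R}$ (with complex-valued $\phi$, the equation holding on each of $(-\infty,0)$ and $(0,\infty)$) is $\phi \equiv 0$. -/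
open MeasureTheory Complex

/-- The piecewise-constant nonlinearity coefficient. -/
noncomputable def GammaPW (Gp Gm : ℝ) (x : ℝ) : ℝ := if x < 0 then Gm else Gp

open Set

lemma hasDerivAt_normSq_comp {f : ℝ → ℂ} {f' : ℂ} {x : ℝ} (hf : HasDerivAt f f' x) :
    HasDerivAt (fun y => Complex.normSq (f y))
      (2 * ((f x).re * f'.re + (f x).im * f'.im)) x := by
  have hre : HasDerivAt (fun y => (f y).re) f'.re x :=
    (Complex.reCLM.hasFDerivAt.comp_hasDerivAt x hf)
  have him : HasDerivAt (fun y => (f y).im) f'.im x :=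
    (Complex.imCLM.hasFDerivAt.comp_hasDerivAt x hf)
  have : HasDerivAt (fun y => (f y).re * (f y).re + (f y).im * (f y).im) _ x :=
    (hre.mul hre).add (him.mul him)
  simp only [Complex.normSq_apply]
  convert this using 1
  ring

lemma exists_tail_small_right (g : ℝ → ℝ) (hg : ∀ x, 0 ≤ g x) (hint : Integrable g)
    (a ε : ℝ) (hε : 0 < ε) : ∃ x, a ≤ x ∧ g x < ε := by
  by_contra h
  push_neg at h
  have hconst : Integrable (fun _ : ℝ => ε) ((volume : Measure ℝ).restrict (Ici a)) := by
    refine (hint.restrict (s := Ici a)).mono aestronglyMeasurable_const ?_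
    filter_upwards [ae_restrict_mem measurableSet_Ici] with x hx
    rw [Real.norm_of_nonneg hε.le, Real.norm_of_nonneg (hg x)]
    exact h x hx
  rw [integrable_const_iff] at hconst
  rcases hconst with h0 | hfin
  · exact hε.ne' h0
  · have hfin := hfin.measure_univ_lt_top
    simp [Measure.restrict_apply_univ, Real.volume_Ici] at hfin

lemma exists_tail_small_left (g : ℝ → ℝ) (hg : ∀ x, 0 ≤ g x) (hint : Integrable g)
    (a ε : ℝ) (hε : 0 < ε) : ∃ x, x ≤ a ∧ g x < ε := by
  by_contra h
  push_neg at h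
  have hconst : Integrable (fun _ : ℝ => ε) ((volume : Measure ℝ).restrict (Iic a)) := by
    refine (hint.restrict (s := Iic a)).mono aestronglyMeasurable_const ?_
    filter_upwards [ae_restrict_mem measurableSet_Iic] with x hx
    rw [Real.norm_of_nonneg hε.le, Real.norm_of_nonneg (hg x)]
    exact h x hx
  rw [integrable_const_iff] at hconst
  rcases hconst with h0 | hfin
  · exact hε.ne' h0
  · have hfin := hfin.measure_univ_lt_top
    simp [Measure.restrict_apply_univ, Real.volume_Iic] at hfin

lemma eq_zero_of_abs_le_lin {c K : ℝ} (hK : 0 ≤ K)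
    (h : ∀ ε : ℝ, 0 < ε → ε < 1 → |c| ≤ ε * K) : c = 0 := by
  by_contra hc
  have hc' : 0 < |c| := abs_pos.mpr hc
  set ε := min (1/2) (|c| / (2 * (K + 1))) with hεdef
  have hε1 : 0 < ε := lt_min (by norm_num) (by positivity)
  have hε2 : ε < 1 := lt_of_le_of_lt (min_le_left _ _) (by norm_num)
  have := h ε hε1 hε2
  have hεle : ε ≤ |c| / (2 * (K + 1)) := min_le_right _ _
  have : |c| ≤ (|c| / (2 * (K + 1))) * K := by
    calc |c| ≤ ε * K := this
    _ ≤ (|c| / (2 * (K + 1))) * K := by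
        exact mul_le_mul_of_nonneg_right hεle hK
  have hKpos : 0 < K + 1 := by linarith
  rw [div_mul_eq_mul_div, le_div_iff₀ (by positivity)] at this
  nlinarith

lemma key_bound (z w : ℂ) : |2 * (z.re * w.re + z.im * w.im)| ≤ Complex.normSq z + Complex.normSq w := by
  rw [abs_le]
  constructor <;>
  · simp only [Complex.normSq_apply]
    nlinarith [sq_nonneg (z.re + w.re), sq_nonneg (z.im + w.im), sq_nonneg (z.re - w.re),
      sq_nonneg (z.im - w.im)]

lemma gronwall_zero_right (g : ℝ → ℝ) (T C : ℝ)
    (hgc : Continuous g) (hg0 : g 0 = 0) (hgnn : ∀ x, 0 ≤ g x)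
    (hderiv : ∀ x ∈ Ioo 0 T, ∃ g', HasDerivAt g g' x ∧ g' ≤ C * g x) :
    ∀ x ∈ Icc 0 T, g x = 0 := by
  have hexp : ∀ x : ℝ, HasDerivAt (fun y : ℝ => Real.exp (-C * y)) (Real.exp (-C * x) * -C) x := by
    intro x
    have : HasDerivAt (fun y : ℝ => -C * y) (-C) x := by
      simpa using (hasDerivAt_id x).const_mul (-C)
    exact this.exp
  have key : AntitoneOn (fun x => g x * Real.exp (-C * x)) (Icc 0 T) := by
    apply antitoneOn_of_deriv_nonpos (convex_Icc 0 T)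
    · exact (hgc.mul (Real.continuous_exp.comp (continuous_const.mul continuous_id))).continuousOn
    · rw [interior_Icc]; intro x hx
      obtain ⟨g', hg', _⟩ := hderiv x hx
      exact (hg'.mul (hexp x)).differentiableAt.differentiableWithinAt
    · rw [interior_Icc]; intro x hx
      obtain ⟨g', hg', hle⟩ := hderiv x hx
      have hh : HasDerivAt (fun x => g x * Real.exp (-C * x))
          (g' * Real.exp (-C * x) + g x * (Real.exp (-C * x) * -C)) x := hg'.mul (hexp x)
      rw [hh.deriv]
      have h1 : g' - C * g x ≤ 0 := by linarith
      have h2 : (g' - C * g x) * Real.exp (-C * x) ≤ 0 :=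
        mul_nonpos_of_nonpos_of_nonneg h1 (Real.exp_pos _).le
      nlinarith [h2]
  intro x hx
  have h0T : (0 : ℝ) ∈ Icc 0 T := ⟨le_rfl, hx.1.trans hx.2⟩
  have h1 := key h0T hx hx.1
  simp only [hg0, zero_mul] at h1
  have hge : 0 ≤ g x * Real.exp (-C * x) := mul_nonneg (hgnn x) (Real.exp_pos _).le
  have h2 : g x * Real.exp (-C * x) = 0 := le_antisymm (by linarith [h1]) hge
  rcases mul_eq_zero.mp h2 with h | h
  · exact h
  · exact absurd h (Real.exp_ne_zero _)

lemma gronwall_zero_left (g : ℝ → ℝ) (T C : ℝ)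
    (hgc : Continuous g) (hg0 : g 0 = 0) (hgnn : ∀ x, 0 ≤ g x)
    (hderiv : ∀ x ∈ Ioo (-T) 0, ∃ g', HasDerivAt g g' x ∧ -(C * g x) ≤ g') :
    ∀ x ∈ Icc (-T) 0, g x = 0 := by
  have hexp : ∀ x : ℝ, HasDerivAt (fun y : ℝ => Real.exp (C * y)) (Real.exp (C * x) * C) x := by
    intro x
    have : HasDerivAt (fun y : ℝ => C * y) C x := by
      simpa using (hasDerivAt_id x).const_mul C
    exact this.exp
  have key : MonotoneOn (fun x => g x * Real.exp (C * x)) (Icc (-T) 0) := by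
    apply monotoneOn_of_deriv_nonneg (convex_Icc (-T) 0)
    · exact (hgc.mul (Real.continuous_exp.comp (continuous_const.mul continuous_id))).continuousOn
    · rw [interior_Icc]; intro x hx
      obtain ⟨g', hg', _⟩ := hderiv x hx
      exact (hg'.mul (hexp x)).differentiableAt.differentiableWithinAt
    · rw [interior_Icc]; intro x hx
      obtain ⟨g', hg', hle⟩ := hderiv x hx
      have hh : HasDerivAt (fun x => g x * Real.exp (C * x))
          (g' * Real.exp (C * x) + g x * (Real.exp (C * x) * C)) x := hg'.mul (hexp x)
      rw [hh.deriv]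
      have h1 : 0 ≤ g' + C * g x := by linarith
      have h2 : 0 ≤ (g' + C * g x) * Real.exp (C * x) :=
        mul_nonneg h1 (Real.exp_pos _).le
      nlinarith [h2]
  intro x hx
  have h0T : (0 : ℝ) ∈ Icc (-T) 0 := ⟨hx.1.trans hx.2, le_rfl⟩
  have h1 := key hx h0T hx.2
  simp only [hg0, zero_mul] at h1
  have hge : 0 ≤ g x * Real.exp (C * x) := mul_nonneg (hgnn x) (Real.exp_pos _).le
  have h2 : g x * Real.exp (C * x) = 0 := le_antisymm (by linarith [h1]) hge
  rcases mul_eq_zero.mp h2 with h | h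
  · exact h
  · exact absurd h (Real.exp_ne_zero _)

/-- For `Γ(x) = Γ₊ χ_[0,∞) + Γ₋ χ_(-∞,0)` with `Γ₊ ≠ Γ₋`, the only
`H¹(ℝ) ∩ C¹(ℝ)` solution of `φ'' + μφ + Γ(x)|φ|²φ = 0` (the equation holding away
from `0`) is `φ ≡ 0`. -/
theorem stmt0 (μ Gp Gm : ℝ) (hG : Gp ≠ Gm) (φ : ℝ → ℂ)
    (hC1 : ContDiff ℝ 1 φ)
    (hH1 : MemLp φ 2 (volume : Measure ℝ) ∧ MemLp (deriv φ) 2 (volume : Measure ℝ))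
    (hode : ∀ x : ℝ, x ≠ 0 →
      HasDerivAt (deriv φ)
        (-((μ : ℂ) * φ x + (GammaPW Gp Gm x : ℝ) * (‖φ x‖ ^ 2 : ℝ) * φ x)) x) :
    φ = 0 := by
  have hdiff : Differentiable ℝ φ := hC1.differentiable one_ne_zero
  have hdf : ∀ x, HasDerivAt φ (deriv φ x) x := fun x => (hdiff x).hasDerivAt
  have hcont1 : Continuous (deriv φ) := hC1.continuous_deriv le_rfl
  -- notation
  set A : ℝ → ℝ := fun x => Complex.normSq (φ x) with hAdef
  set B : ℝ → ℝ := fun x => Complex.normSq (deriv φ x) with hBdef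
  set Dd : ℝ → ℝ := fun x => (φ x).re * (deriv φ x).re + (φ x).im * (deriv φ x).im with hDdef
  have hA0 : ∀ x, 0 ≤ A x := fun x => Complex.normSq_nonneg _
  have hB0 : ∀ x, 0 ≤ B x := fun x => Complex.normSq_nonneg _
  have hAcont : Continuous A := Complex.continuous_normSq.comp hdiff.continuous
  have hBcont : Continuous B := Complex.continuous_normSq.comp hcont1
  have hnormA : ∀ x, (‖φ x‖ ^ 2 : ℝ) = A x := by
    intro x
    rw [hAdef]
    simp only [← Complex.sq_norm]
  have hA : ∀ x, HasDerivAt A (2 * Dd x) x := fun x => hasDerivAt_normSq_comp (hdf x)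
  -- rewritten ODE
  have hode' : ∀ x : ℝ, x ≠ 0 →
      HasDerivAt (deriv φ) (((-(μ + GammaPW Gp Gm x * A x) : ℝ) : ℂ) * φ x) x := by
    intro x hx
    convert hode x hx using 1
    rw [← hnormA x]
    push_cast
    ring
  have hB : ∀ x : ℝ, x ≠ 0 →
      HasDerivAt B (2 * (-(μ + GammaPW Gp Gm x * A x)) * Dd x) x := by
    intro x hx
    have h2 := hasDerivAt_normSq_comp (hode' x hx)
    convert h2 using 1
    rw [hDdef]
    simp only [Complex.re_ofReal_mul, Complex.im_ofReal_mul]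
    ring
  -- energies
  set Pp : ℝ → ℝ := fun x => B x + μ * A x + Gp / 2 * A x ^ 2 with hPpdef
  set Pm : ℝ → ℝ := fun x => B x + μ * A x + Gm / 2 * A x ^ 2 with hPmdef
  have hPpcont : Continuous Pp := by
    rw [hPpdef]; continuity
  have hPmcont : Continuous Pm := by
    rw [hPmdef]; continuity
  have hPp' : ∀ x : ℝ, 0 < x → HasDerivAt Pp 0 x := by
    intro x hx
    have hg : GammaPW Gp Gm x = Gp := if_neg (not_lt.mpr hx.le)
    have h1 : HasDerivAt (fun y => B y + μ * A y + Gp / 2 * A y ^ 2) _ x :=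
      ((hB x hx.ne').add ((hA x).const_mul μ)).add (((hA x).pow 2).const_mul (Gp / 2))
    convert h1 using 1
    rw [hg]
    push_cast
    ring
  have hPm' : ∀ x : ℝ, x < 0 → HasDerivAt Pm 0 x := by
    intro x hx
    have hg : GammaPW Gp Gm x = Gm := if_pos hx
    have h1 : HasDerivAt (fun y => B y + μ * A y + Gm / 2 * A y ^ 2) _ x :=
      ((hB x hx.ne).add ((hA x).const_mul μ)).add (((hA x).pow 2).const_mul (Gm / 2))
    convert h1 using 1
    rw [hg]
    push_cast
    ring
  -- constancy
  have hconstp : ∀ a b : ℝ, 0 < a → a ≤ b → Pp b = Pp a := by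
    intro a b ha hab
    have := constant_of_has_deriv_right_zero (f := Pp) (a := a) (b := b)
      hPpcont.continuousOn
      (fun x hx => ((hPp' x (lt_of_lt_of_le ha hx.1)).hasDerivWithinAt))
    exact this b ⟨hab, le_rfl⟩
  have hconstm : ∀ a b : ℝ, b < 0 → a ≤ b → Pm a = Pm b := by
    intro a b hb hab
    have := constant_of_has_deriv_right_zero (f := Pm) (a := a) (b := b)
      hPmcont.continuousOn
      (fun x hx => ((hPm' x (lt_of_lt_of_le hx.2 hb.le)).hasDerivWithinAt))
    exact (this b ⟨hab, le_rfl⟩).symm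
  -- integrability
  have hintA : Integrable A := by
    have h := hH1.1.integrable_norm_rpow (p := 2) (by norm_num) (by norm_num)
    refine h.congr (Filter.Eventually.of_forall fun x => ?_)
    show ‖φ x‖ ^ ((2 : ENNReal)).toReal = A x
    rw [show ((2 : ENNReal)).toReal = ((2 : ℕ) : ℝ) by norm_num, Real.rpow_natCast]
    exact hnormA x
  have hintB : Integrable B := by
    have h := hH1.2.integrable_norm_rpow (p := 2) (by norm_num) (by norm_num)
    refine h.congr (Filter.Eventually.of_forall fun x => ?_)
    show ‖deriv φ x‖ ^ ((2 : ENNReal)).toReal = B x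
    rw [show ((2 : ENNReal)).toReal = ((2 : ℕ) : ℝ) by norm_num, Real.rpow_natCast, hBdef]
    simp only [← Complex.sq_norm]
  have hintAB : Integrable (fun x => A x + B x) := hintA.add hintB
  have habnn : ∀ y, 0 ≤ A y + B y := fun y => add_nonneg (hA0 y) (hB0 y)
  -- vanishing of the energies on half-lines
  have hbound : ∀ G : ℝ, ∀ z : ℝ, ∀ ε : ℝ, 0 < ε → ε < 1 → A z + B z < ε →
      |B z + μ * A z + G / 2 * A z ^ 2| ≤ ε * (1 + |μ| + |G| / 2) := by
    intro G z ε hε hε1 hzsmall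
    have hAz : A z ≤ ε := by linarith [hB0 z]
    have hBz : B z ≤ ε := by linarith [hA0 z]
    have h1 : μ * A z ≤ |μ| * ε := by
      calc μ * A z ≤ |μ| * A z := mul_le_mul_of_nonneg_right (le_abs_self μ) (hA0 z)
        _ ≤ |μ| * ε := mul_le_mul_of_nonneg_left hAz (abs_nonneg μ)
    have h1' : -(|μ| * ε) ≤ μ * A z := by
      have ha : -|μ| * A z ≤ μ * A z := mul_le_mul_of_nonneg_right (neg_abs_le μ) (hA0 z)
      have hb2 : |μ| * A z ≤ |μ| * ε := mul_le_mul_of_nonneg_left hAz (abs_nonneg μ)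
      linarith
    have h2 : A z ^ 2 ≤ ε := by
      have e1 : A z ^ 2 ≤ ε ^ 2 := pow_le_pow_left₀ (hA0 z) hAz 2
      nlinarith
    have e1 : G * A z ^ 2 ≤ |G| * A z ^ 2 := mul_le_mul_of_nonneg_right (le_abs_self G) (sq_nonneg _)
    have e1' : -|G| * A z ^ 2 ≤ G * A z ^ 2 := mul_le_mul_of_nonneg_right (neg_abs_le G) (sq_nonneg _)
    have e2 : |G| * A z ^ 2 ≤ |G| * ε := mul_le_mul_of_nonneg_left h2 (abs_nonneg G)
    rw [abs_le]
    constructor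
    · linarith [hB0 z]
    · linarith
  have hPp0 : ∀ x : ℝ, 0 < x → Pp x = 0 := by
    intro x hx
    apply eq_zero_of_abs_le_lin (K := 1 + |μ| + |Gp| / 2) (by positivity)
    intro ε hε hε1
    obtain ⟨z, hz, hzsmall⟩ := exists_tail_small_right (fun y => A y + B y)
      habnn hintAB (max x 1) ε hε
    have hxz : x ≤ z := le_trans (le_max_left _ _) hz
    have hPx : Pp x = Pp z := (hconstp x z hx hxz).symm
    rw [hPx, hPpdef]
    exact hbound Gp z ε hε hε1 hzsmall
  have hPm0 : ∀ x : ℝ, x < 0 → Pm x = 0 := by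
    intro x hx
    apply eq_zero_of_abs_le_lin (K := 1 + |μ| + |Gm| / 2) (by positivity)
    intro ε hε hε1
    obtain ⟨z, hz, hzsmall⟩ := exists_tail_small_left (fun y => A y + B y)
      habnn hintAB (min x (-1)) ε hε
    have hxz : z ≤ x := le_trans hz (min_le_left _ _)
    have hPx : Pm x = Pm z := by
      rw [hconstm z x hx hxz]
    rw [hPx, hPmdef]
    exact hbound Gm z ε hε hε1 hzsmall
  -- energies vanish at 0 by continuity
  have hPp00 : Pp 0 = 0 := by
    have h1 : Filter.Tendsto Pp (nhdsWithin 0 (Ioi 0)) (nhds (Pp 0)) :=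
      (hPpcont.tendsto 0).mono_left nhdsWithin_le_nhds
    have h2 : Filter.Tendsto Pp (nhdsWithin 0 (Ioi 0)) (nhds 0) := by
      apply Filter.Tendsto.congr' _ tendsto_const_nhds
      filter_upwards [self_mem_nhdsWithin] with y hy
      exact (hPp0 y hy).symm
    exact tendsto_nhds_unique h1 h2
  have hPm00 : Pm 0 = 0 := by
    have h1 : Filter.Tendsto Pm (nhdsWithin 0 (Iio 0)) (nhds (Pm 0)) :=
      (hPmcont.tendsto 0).mono_left nhdsWithin_le_nhds
    have h2 : Filter.Tendsto Pm (nhdsWithin 0 (Iio 0)) (nhds 0) := by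
      apply Filter.Tendsto.congr' _ tendsto_const_nhds
      filter_upwards [self_mem_nhdsWithin] with y hy
      exact (hPm0 y hy).symm
    exact tendsto_nhds_unique h1 h2
  -- φ and φ' vanish at 0
  have hA00 : A 0 = 0 := by
    simp only [hPpdef, hPmdef] at hPp00 hPm00
    have h2 : (Gp - Gm) * A 0 ^ 2 = 0 := by linarith
    rcases mul_eq_zero.mp h2 with h | h
    · exact absurd (by linarith) hG
    · exact pow_eq_zero_iff (two_ne_zero) |>.mp h
  have hB00 : B 0 = 0 := by
    simp only [hPpdef] at hPp00
    rw [hA00] at hPp00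
    nlinarith [hPp00]
  have hg00 : (fun y => A y + B y) 0 = 0 := by simp [hA00, hB00]
  -- Gronwall on the right
  have hzero_right : ∀ x : ℝ, 0 ≤ x → A x = 0 := by
    intro x hx
    rcases eq_or_lt_of_le hx with h | hx'
    · rw [← h]; exact hA00
    · obtain ⟨xm, hxm, hM⟩ := isCompact_Icc.exists_isMaxOn (nonempty_Icc.mpr hx)
        (hAcont.continuousOn (s := Icc 0 x))
      have hM0 : 0 ≤ A xm := hA0 xm
      have key := gronwall_zero_right (fun y => A y + B y) x (1 + |μ| + |Gp| * A xm)
        (hAcont.add hBcont) hg00 habnn ?_ x ⟨hx, le_rfl⟩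
      · have key' : A x + B x = 0 := key
        linarith [hA0 x, hB0 x, key']
      intro y hy
      have hgam : GammaPW Gp Gm y = Gp := if_neg (not_lt.mpr hy.1.le)
      refine ⟨2 * Dd y + 2 * (-(μ + Gp * A y)) * Dd y, ?_, ?_⟩
      · have h1 := (hA y).add (hB y hy.1.ne')
        rw [hgam] at h1
        exact h1
      · have hkey : |2 * Dd y| ≤ A y + B y := key_bound (φ y) (deriv φ y)
        have hAyM : A y ≤ A xm := hM ⟨hy.1.le, hy.2.le⟩
        have habs : |1 - μ - Gp * A y| ≤ 1 + |μ| + |Gp| * A xm := by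
          have h1 : |Gp * A y| ≤ |Gp| * A xm := by
            rw [abs_mul, _root_.abs_of_nonneg (hA0 y)]
            exact mul_le_mul_of_nonneg_left hAyM (abs_nonneg _)
          rw [abs_le] at h1 ⊢
          constructor <;> linarith [neg_abs_le μ, le_abs_self μ, h1.1, h1.2]
        calc 2 * Dd y + 2 * (-(μ + Gp * A y)) * Dd y
            = 2 * Dd y * (1 - μ - Gp * A y) := by ring
          _ ≤ |2 * Dd y * (1 - μ - Gp * A y)| := le_abs_self _
          _ = |2 * Dd y| * |1 - μ - Gp * A y| := abs_mul _ _
          _ ≤ (A y + B y) * (1 + |μ| + |Gp| * A xm) :=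
              mul_le_mul hkey habs (abs_nonneg _) (habnn y)
          _ = (1 + |μ| + |Gp| * A xm) * (A y + B y) := mul_comm _ _
  -- Gronwall on the left
  have hzero_left : ∀ x : ℝ, x ≤ 0 → A x = 0 := by
    intro x hx
    rcases eq_or_lt_of_le hx with h | hx'
    · rw [h]; exact hA00
    · obtain ⟨xm, hxm, hM⟩ := isCompact_Icc.exists_isMaxOn (nonempty_Icc.mpr hx)
        (hAcont.continuousOn (s := Icc x 0))
      have hM0 : 0 ≤ A xm := hA0 xm
      have key := gronwall_zero_left (fun y => A y + B y) (-x) (1 + |μ| + |Gm| * A xm)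
        (hAcont.add hBcont) hg00 habnn ?_ x ⟨by rw [neg_neg], hx⟩
      · have key' : A x + B x = 0 := key
        linarith [hA0 x, hB0 x, key']
      intro y hy
      rw [neg_neg] at hy
      have hgam : GammaPW Gp Gm y = Gm := if_pos hy.2
      refine ⟨2 * Dd y + 2 * (-(μ + Gm * A y)) * Dd y, ?_, ?_⟩
      · have h1 := (hA y).add (hB y hy.2.ne)
        rw [hgam] at h1
        exact h1
      · have hkey : |2 * Dd y| ≤ A y + B y := key_bound (φ y) (deriv φ y)
        have hAyM : A y ≤ A xm := hM ⟨hy.1.le, hy.2.le⟩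
        have habs : |1 - μ - Gm * A y| ≤ 1 + |μ| + |Gm| * A xm := by
          have h1 : |Gm * A y| ≤ |Gm| * A xm := by
            rw [abs_mul, _root_.abs_of_nonneg (hA0 y)]
            exact mul_le_mul_of_nonneg_left hAyM (abs_nonneg _)
          rw [abs_le] at h1 ⊢
          constructor <;> linarith [neg_abs_le μ, le_abs_self μ, h1.1, h1.2]
        calc -((1 + |μ| + |Gm| * A xm) * (A y + B y))
            = -((A y + B y) * (1 + |μ| + |Gm| * A xm)) := by ring
          _ ≤ -(|2 * Dd y| * |1 - μ - Gm * A y|) := by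
              exact neg_le_neg (mul_le_mul hkey habs (abs_nonneg _) (habnn y))
          _ = -|2 * Dd y * (1 - μ - Gm * A y)| := by rw [← abs_mul]
          _ ≤ 2 * Dd y * (1 - μ - Gm * A y) := neg_abs_le _
          _ = 2 * Dd y + 2 * (-(μ + Gm * A y)) * Dd y := by ring
  -- conclusion
  funext x
  have hAx : A x = 0 := by
    rcases le_or_gt 0 x with hx | hx
    · exact hzero_right x hx
    · exact hzero_left x hx.le
  have : Complex.normSq (φ x) = 0 := hAx
  simpa [Complex.normSq_eq_zero] using this
end

section
/- Let $\phi_s \in L^\infty(\mathbb{R})$ be real-valued, $\Gamma \in L^\infty(\mathbb{R})$, $V, \mu_s$ real, and suppose $\lambda \in \mathbb{C}$ is an eigenvalue of the linearized operator, i.e. there exist $a, b \in H^2(\mathbb{R})$, not both zero, with $\lambda a = L_- b$ and $\lambda b = -L_+ a$, where $L_- = -\partial_x^2 + V(x) - \mu_s - \Gamma(x)\phi_s^2(x)$ and $L_+ = -\partial_x^2 + V(x) - \mu_s - 3\Gamma(x)\phi_s^2(x)$. Then $|\mathrm{Re}(\lambda)| \leq \|\Gamma\|_\infty \|\phi_s\|_\infty^2$.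 -/
set_option maxHeartbeats 1000000


open MeasureTheory Complex

section helpers
open Set Filter Topology ENNReal NNReal

private lemma sqInt {f : ℝ → ℂ} (hf : MemLp f 2 (volume : Measure ℝ)) :
    Integrable (fun x => ‖f x‖ ^ 2) (volume : Measure ℝ) := by
  have h := hf.integrable_norm_rpow (by norm_num) (by norm_num)
  simpa [ENNReal.toReal_ofNat, Real.rpow_natCast] using h

private lemma mulInt {f g : ℝ → ℂ} (hf : MemLp f 2 (volume : Measure ℝ))
    (hg : MemLp g 2 (volume : Measure ℝ)) :
    Integrable (fun x => f x * g x) (volume : Measure ℝ) := by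
  refine (((sqInt hf).add (sqInt hg)).div_const 2).mono' (hf.1.mul hg.1)
    (Filter.Eventually.of_forall fun x => ?_)
  rw [norm_mul]
  simp only [Pi.add_apply]
  nlinarith [norm_nonneg (g x), norm_nonneg (f x), sq_nonneg (‖f x‖ - ‖g x‖)]

private lemma conjMem {f : ℝ → ℂ} (hf : MemLp f 2 (volume : Measure ℝ)) :
    MemLp (fun x => (starRingEnd ℂ) (f x)) 2 (volume : Measure ℝ) := by
  refine ⟨Complex.continuous_conj.comp_aestronglyMeasurable hf.1, ?_⟩
  have : eLpNorm (fun x => (starRingEnd ℂ) (f x)) 2 (volume : Measure ℝ)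
      = eLpNorm f 2 volume := by
    apply eLpNorm_congr_norm_ae
    filter_upwards with x
    simp
  rw [this]; exact hf.2

private lemma integral_deriv_zero {g g' : ℝ → ℂ} (hg : ∀ x, HasDerivAt g (g' x) x)
    (hgi : Integrable g (volume : Measure ℝ)) (hg'i : Integrable g' (volume : Measure ℝ)) :
    ∫ x, g' x = 0 := by
  have htop : Tendsto g atTop (𝓝 0) :=
    tendsto_zero_of_hasDerivAt_of_integrableOn_Ioi (a := 0) (fun x _ => hg x)
      hg'i.integrableOn hgi.integrableOn
  have hbot : Tendsto g atBot (𝓝 0) :=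
    tendsto_zero_of_hasDerivAt_of_integrableOn_Iic (a := 0) (fun x _ => hg x)
      hg'i.integrableOn hgi.integrableOn
  have h1 : ∫ x in Ioi (0:ℝ), g' x = 0 - g 0 :=
    integral_Ioi_of_hasDerivAt_of_tendsto' (fun x _ => hg x) hg'i.integrableOn htop
  have h2 : ∫ x in Iic (0:ℝ), g' x = g 0 - 0 :=
    integral_Iic_of_hasDerivAt_of_tendsto' (fun x _ => hg x) hg'i.integrableOn hbot
  rw [← intervalIntegral.integral_Iic_add_Ioi (b := (0:ℝ)) hg'i.integrableOn hg'i.integrableOn,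
    h1, h2]
  ring

private lemma posInt {f : ℝ → ℂ} (hc : Continuous f) (hf : MemLp f 2 (volume : Measure ℝ))
    (hne : f ≠ 0) : 0 < ∫ x, ‖f x‖ ^ 2 := by
  rw [integral_pos_iff_support_of_nonneg (fun x => sq_nonneg _) (sqInt hf)]
  have hss : Function.support (fun x => ‖f x‖ ^ 2) = Function.support f := by
    ext x; simp [Function.support, pow_eq_zero_iff, norm_eq_zero]
  rw [hss]
  have hopen : IsOpen (Function.support f) := by
    have : Function.support f = f ⁻¹' {0}ᶜ := by ext x; simp [Function.mem_support]
    rw [this]; exact (isClosed_singleton.preimage hc).isOpen_compl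
  rw [Function.ne_iff] at hne
  obtain ⟨x, hx⟩ := hne
  exact hopen.measure_pos volume ⟨x, hx⟩

private lemma essBound {f : ℝ → ℝ} (hf : MemLp f ⊤ (volume : Measure ℝ)) :
    ∀ᵐ x ∂(volume : Measure ℝ), |f x| ≤ (eLpNorm f ⊤ (volume : Measure ℝ)).toReal := by
  have h := ae_le_eLpNormEssSup (f := f) (μ := (volume : Measure ℝ))
  have hlt : eLpNormEssSup f (volume : Measure ℝ) ≠ ⊤ := by
    rw [← eLpNorm_exponent_top]; exact hf.2.ne
  filter_upwards [h] with x hx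
  have : ((‖f x‖₊ : ℝ≥0∞)).toReal ≤ (eLpNormEssSup f (volume : Measure ℝ)).toReal :=
    ENNReal.toReal_mono hlt hx
  simpa [eLpNorm_exponent_top, Real.norm_eq_abs] using this

end helpers

/-- The operator `L₋ = -∂ₓ² + V - μ_s - Γ φ_s²` applied to `b`. -/
noncomputable def Lminus (V Γ φs : ℝ → ℝ) (μs : ℝ) (b : ℝ → ℂ) (x : ℝ) : ℂ :=
  -deriv (deriv b) x + ((V x - μs - Γ x * φs x ^ 2 : ℝ) : ℂ) * b x

/-- The operator `L₊ = -∂ₓ² + V - μ_s - 3Γ φ_s²` applied to `a`. -/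
noncomputable def Lplus (V Γ φs : ℝ → ℝ) (μs : ℝ) (a : ℝ → ℂ) (x : ℝ) : ℂ :=
  -deriv (deriv a) x + ((V x - μs - 3 * Γ x * φs x ^ 2 : ℝ) : ℂ) * a x

/-- eigenvalues `λ` of the linearized operator satisfy
`|Re λ| ≤ ‖Γ‖_∞ ‖φ_s‖_∞²`. -/
theorem stmt3 (V Γ φs : ℝ → ℝ) (μs : ℝ) (lam : ℂ) (a b : ℝ → ℂ)
    (hφs : MemLp φs ⊤ (volume : Measure ℝ)) (hΓ : MemLp Γ ⊤ (volume : Measure ℝ))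
    (ha : ContDiff ℝ 2 a) (hb : ContDiff ℝ 2 b)
    (haL2 : MemLp a 2 (volume : Measure ℝ)) (haL2' : MemLp (deriv a) 2 (volume : Measure ℝ))
    (haL2'' : MemLp (deriv (deriv a)) 2 (volume : Measure ℝ))
    (hbL2 : MemLp b 2 (volume : Measure ℝ)) (hbL2' : MemLp (deriv b) 2 (volume : Measure ℝ))
    (hbL2'' : MemLp (deriv (deriv b)) 2 (volume : Measure ℝ))
    (hnz : a ≠ 0 ∨ b ≠ 0)
    (heq1 : ∀ x, lam * a x = Lminus V Γ φs μs b x)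
    (heq2 : ∀ x, lam * b x = -Lplus V Γ φs μs a x) :
    |lam.re| ≤ (eLpNorm Γ ⊤ (volume : Measure ℝ)).toReal *
      ((eLpNorm φs ⊤ (volume : Measure ℝ)).toReal) ^ 2 := by
  set tΓ := (eLpNorm Γ ⊤ (volume : Measure ℝ)).toReal with htΓ
  set tφ := (eLpNorm φs ⊤ (volume : Measure ℝ)).toReal with htφ
  set M := tΓ * tφ ^ 2 with hM
  have htΓ0 : 0 ≤ tΓ := ENNReal.toReal_nonneg
  have htφ0 : 0 ≤ tφ := ENNReal.toReal_nonneg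
  have hM0 : 0 ≤ M := mul_nonneg htΓ0 (sq_nonneg _)
  -- differentiability
  have haD : Differentiable ℝ a := ha.differentiable (by norm_num)
  have ha1 : ContDiff ℝ 1 (deriv a) := by
    have h2 : ContDiff ℝ (1 + 1 : ℕ) a := by exact_mod_cast ha
    exact (contDiff_succ_iff_deriv.mp h2).2.2
  have haD' : Differentiable ℝ (deriv a) := ha1.differentiable one_ne_zero
  have hbD : Differentiable ℝ b := hb.differentiable (by norm_num)
  have hb1 : ContDiff ℝ 1 (deriv b) := by
    have h2 : ContDiff ℝ (1 + 1 : ℕ) b := by exact_mod_cast hb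
    exact (contDiff_succ_iff_deriv.mp h2).2.2
  have hbD' : Differentiable ℝ (deriv b) := hb1.differentiable one_ne_zero
  -- G and its derivative
  have hG : ∀ x, HasDerivAt
      (fun y => (starRingEnd ℂ) (deriv a y) * b y - (starRingEnd ℂ) (a y) * deriv b y)
      (b x * (starRingEnd ℂ) (deriv (deriv a) x) - (starRingEnd ℂ) (a x) * deriv (deriv b) x)
      x := by
    intro x
    have h1 : HasDerivAt (fun y => (starRingEnd ℂ) (deriv a y))
        ((starRingEnd ℂ) (deriv (deriv a) x)) x := ((haD' x).hasDerivAt).star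
    have h0 : HasDerivAt (fun y => (starRingEnd ℂ) (a y))
        ((starRingEnd ℂ) (deriv a x)) x := ((haD x).hasDerivAt).star
    have h2 := (h1.mul (hbD x).hasDerivAt).sub (h0.mul (hbD' x).hasDerivAt)
    refine h2.congr_deriv ?_
    ring
  -- key pointwise identity
  have key : ∀ x,
      lam * ((starRingEnd ℂ) (a x) * a x) + (starRingEnd ℂ) lam * ((starRingEnd ℂ) (b x) * b x)
      = (b x * (starRingEnd ℂ) (deriv (deriv a) x) - (starRingEnd ℂ) (a x) * deriv (deriv b) x)
        + 2 * (((Γ x * φs x ^ 2 : ℝ) : ℂ) * ((starRingEnd ℂ) (a x) * b x)) := by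
    intro x
    have h1 := heq1 x
    have h2 := congrArg (starRingEnd ℂ) (heq2 x)
    simp only [Lminus, Lplus, map_mul, map_add, map_neg, map_sub, Complex.conj_ofReal] at h1 h2
    push_cast at h1 h2 ⊢
    linear_combination (starRingEnd ℂ) (a x) * h1 + b x * h2
  -- integrability
  have iaa : Integrable (fun x => (starRingEnd ℂ) (a x) * a x) volume :=
    mulInt (conjMem haL2) haL2
  have ibb : Integrable (fun x => (starRingEnd ℂ) (b x) * b x) volume :=
    mulInt (conjMem hbL2) hbL2
  have iLHS : Integrable (fun x => lam * ((starRingEnd ℂ) (a x) * a x)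
      + (starRingEnd ℂ) lam * ((starRingEnd ℂ) (b x) * b x)) volume :=
    (iaa.const_mul lam).add (ibb.const_mul ((starRingEnd ℂ) lam))
  have iG' : Integrable (fun x => b x * (starRingEnd ℂ) (deriv (deriv a) x)
      - (starRingEnd ℂ) (a x) * deriv (deriv b) x) volume :=
    (mulInt hbL2 (conjMem haL2'')).sub (mulInt (conjMem haL2) hbL2'')
  have iG : Integrable (fun x => (starRingEnd ℂ) (deriv a x) * b x
      - (starRingEnd ℂ) (a x) * deriv b x) volume :=
    (mulInt (conjMem haL2') hbL2).sub (mulInt (conjMem haL2) hbL2')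
  have iPot : Integrable (fun x =>
      2 * (((Γ x * φs x ^ 2 : ℝ) : ℂ) * ((starRingEnd ℂ) (a x) * b x))) volume := by
    apply (iLHS.sub iG').congr
    filter_upwards with x
    simp only [Pi.sub_apply]
    rw [key x]; ring
  have iI : Integrable (fun x =>
      (((Γ x * φs x ^ 2 : ℝ) : ℂ) * ((starRingEnd ℂ) (a x) * b x))) volume := by
    have := iPot.const_mul (2⁻¹ : ℂ)
    apply this.congr
    filter_upwards with x
    ring
  -- integral of the derivative term vanishes
  have hzero : ∫ x, (b x * (starRingEnd ℂ) (deriv (deriv a) x)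
      - (starRingEnd ℂ) (a x) * deriv (deriv b) x) = 0 :=
    integral_deriv_zero hG iG iG'
  -- set up real quantities
  set A : ℝ := ∫ x, ‖a x‖ ^ 2 with hA
  set B : ℝ := ∫ x, ‖b x‖ ^ 2 with hB
  have hconj : ∀ z : ℂ, (starRingEnd ℂ) z * z = ((‖z‖ ^ 2 : ℝ) : ℂ) := by
    intro z
    rw [mul_comm, Complex.mul_conj, Complex.normSq_eq_norm_sq]
  have hIaa : ∫ x, (starRingEnd ℂ) (a x) * a x = ((A : ℝ) : ℂ) := by
    rw [hA, integral_congr_ae (Filter.Eventually.of_forall fun x => hconj (a x))]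
    exact integral_ofReal
  have hIbb : ∫ x, (starRingEnd ℂ) (b x) * b x = ((B : ℝ) : ℂ) := by
    rw [hB, integral_congr_ae (Filter.Eventually.of_forall fun x => hconj (b x))]
    exact integral_ofReal
  set I : ℂ := ∫ x, (((Γ x * φs x ^ 2 : ℝ) : ℂ) * ((starRingEnd ℂ) (a x) * b x)) with hI
  -- main integrated identity
  have hmain : lam * ((A : ℝ) : ℂ) + (starRingEnd ℂ) lam * ((B : ℝ) : ℂ) = 2 * I := by
    have h1 : ∫ x, (lam * ((starRingEnd ℂ) (a x) * a x)
        + (starRingEnd ℂ) lam * ((starRingEnd ℂ) (b x) * b x)) = 2 * I := by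
      rw [integral_congr_ae (Filter.Eventually.of_forall key), integral_add iG' iPot, hzero,
        MeasureTheory.integral_const_mul, hI]
      ring
    rw [← h1, integral_add (iaa.const_mul lam) (ibb.const_mul _), MeasureTheory.integral_const_mul,
      MeasureTheory.integral_const_mul, hIaa, hIbb]
  -- take real parts
  have hre : lam.re * (A + B) = 2 * I.re := by
    have := congrArg Complex.re hmain
    simp only [Complex.add_re, Complex.mul_re, Complex.ofReal_re, Complex.ofReal_im,
      Complex.conj_re, Complex.conj_im, Complex.re_ofNat, Complex.im_ofNat] at this
    linarith [this]
  -- a.e. bound for the integrand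
  have hbound : ∀ᵐ x ∂(volume : Measure ℝ),
      ‖(((Γ x * φs x ^ 2 : ℝ) : ℂ) * ((starRingEnd ℂ) (a x) * b x))‖
        ≤ M / 2 * (‖a x‖ ^ 2 + ‖b x‖ ^ 2) := by
    filter_upwards [essBound hΓ, essBound hφs] with x hΓx hφx
    have h1 : ‖(((Γ x * φs x ^ 2 : ℝ) : ℂ) * ((starRingEnd ℂ) (a x) * b x))‖
        = |Γ x * φs x ^ 2| * (‖a x‖ * ‖b x‖) := by
      simp only [norm_mul, Complex.norm_real, Complex.norm_conj, Real.norm_eq_abs, ← abs_mul]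
    rw [h1]
    have h2 : |Γ x * φs x ^ 2| ≤ M := by
      rw [abs_mul, _root_.abs_pow, hM]
      exact mul_le_mul hΓx (pow_le_pow_left₀ (abs_nonneg _) hφx 2) (by positivity) htΓ0
    have h3 : ‖a x‖ * ‖b x‖ ≤ (‖a x‖ ^ 2 + ‖b x‖ ^ 2) / 2 := by
      nlinarith [sq_nonneg (‖a x‖ - ‖b x‖)]
    have h4 : (0:ℝ) ≤ ‖a x‖ * ‖b x‖ := mul_nonneg (norm_nonneg _) (norm_nonneg _)
    calc |Γ x * φs x ^ 2| * (‖a x‖ * ‖b x‖) ≤ M * ((‖a x‖ ^ 2 + ‖b x‖ ^ 2) / 2) := by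
          apply mul_le_mul h2 h3 h4 hM0
      _ = M / 2 * (‖a x‖ ^ 2 + ‖b x‖ ^ 2) := by ring
  -- bound |I.re|
  have hIbound : |I.re| ≤ M / 2 * (A + B) := by
    have h1 : |I.re| ≤ ‖I‖ := Complex.abs_re_le_norm I
    have h2 : ‖I‖ ≤ ∫ x, ‖(((Γ x * φs x ^ 2 : ℝ) : ℂ) * ((starRingEnd ℂ) (a x) * b x))‖ :=
      norm_integral_le_integral_norm _
    have h3 : ∫ x, ‖(((Γ x * φs x ^ 2 : ℝ) : ℂ) * ((starRingEnd ℂ) (a x) * b x))‖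
        ≤ ∫ x, M / 2 * (‖a x‖ ^ 2 + ‖b x‖ ^ 2) :=
      integral_mono_ae iI.norm (((sqInt haL2).add (sqInt hbL2)).const_mul (M / 2)) hbound
    have h4 : ∫ x, M / 2 * (‖a x‖ ^ 2 + ‖b x‖ ^ 2) = M / 2 * (A + B) := by
      rw [MeasureTheory.integral_const_mul, integral_add (sqInt haL2) (sqInt hbL2)]
    linarith
  -- positivity
  have hApos : 0 ≤ A := integral_nonneg fun x => sq_nonneg _
  have hBpos : 0 ≤ B := integral_nonneg fun x => sq_nonneg _
  have hS : 0 < A + B := by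
    rcases hnz with h | h
    · have := posInt ha.continuous haL2 h
      linarith
    · have := posInt hb.continuous hbL2 h
      linarith
  -- conclude
  have hfin : |lam.re| * (A + B) ≤ M * (A + B) := by
    have : |lam.re| * (A + B) = |lam.re * (A + B)| := by
      rw [abs_mul, abs_of_pos hS]
    rw [this, hre, abs_mul]
    have : |(2:ℝ)| * |I.re| ≤ 2 * (M / 2 * (A + B)) := by
      rw [_root_.abs_two]; linarith
    have e : 2 * (M / 2 * (A + B)) = M * (A + B) := by ring
    norm_num at this ⊢
    linarith
  exact le_of_mul_le_mul_right hfin hS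
end
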